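/- There exist constants C > 0 and r₀ > 1 such that for all r ≥ r₀, |R(r)| ≤ C·ρ(r)^(−2(β+1)/(β+2)). -/

import Mathlib

set_option maxHeartbeats 1000000

open Real

noncomputable def rhoFJ (α β : ℝ) (r : ℝ) : ℝ :=
  ∫ t in (0:ℝ)..r, Real.sqrt ((α + Real.log (1 + t ^ 2)) ^ β / (α ^ β * (1 + t ^ 2)))

/-- The scalar curvature of the metric, restricted to the radial variable `r`. -/
noncomputable def RscalFJ (n : ℕ) (α β : ℝ) (r : ℝ) : ℝ :=
  let y : ℝ := α + Real.log (1 + r ^ 2)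
  let D : ℝ := y ^ (β + 1) - α ^ (β + 1)
  let g11 : ℝ := α ^ β * (1 + r ^ 2) / y ^ β
  let gv : ℝ := (β + 1) * α ^ β * r ^ 2 / D
  let R11 : ℝ := (β / y - 1) / (1 + r ^ 2) ^ 2
    + ((n : ℝ) - 1) * (β + 1) * y ^ β / (D * (1 + r ^ 2))
    - β * r ^ 2 / (y ^ 2 * (1 + r ^ 2) ^ 2)
    + ((n : ℝ) - 1) * (β + 1) * y ^ (β - 1) * (β - y) * r ^ 2 / (D * (1 + r ^ 2) ^ 2)
    - ((n : ℝ) - 1) * (β + 1) ^ 2 * y ^ (2 * β) * r ^ 2 / (D ^ 2 * (1 + r ^ 2) ^ 2)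
  let Rv : ℝ := (β / y - 1) / (1 + r ^ 2) - ((n : ℝ) - 1) / r ^ 2
    + ((n : ℝ) - 1) * (β + 1) * y ^ β / (D * (1 + r ^ 2))
  g11 * R11 + ((n : ℝ) - 1) * gv * Rv

lemma aux_cont (α β : ℝ) (hα : 0 < α) (hβ : 0 ≤ β) :
    Continuous (fun t : ℝ => Real.sqrt ((α + Real.log (1 + t ^ 2)) ^ β / (α ^ β * (1 + t ^ 2)))) := by
  have h1 : ∀ t : ℝ, (1 : ℝ) + t ^ 2 ≠ 0 := fun t => by positivity
  apply Continuous.sqrt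
  apply Continuous.div
  · apply Continuous.rpow_const
    · exact continuous_const.add ((continuous_const.add (continuous_pow 2)).log h1)
    · exact fun t => Or.inr hβ
  · exact continuous_const.mul (continuous_const.add (continuous_pow 2))
  · exact fun t => by have := Real.rpow_pos_of_pos hα β; positivity

lemma aux_rho (α β : ℝ) (hβ : 0 ≤ β) (hα : 0 < α) :
    ∃ M : ℝ, 0 < M ∧ ∀ r : ℝ, 1 ≤ r →
      0 < rhoFJ α β r ∧ rhoFJ α β r ≤ M * (α + Real.log (1 + r ^ 2)) ^ ((β + 2) / 2) := by
  set f : ℝ → ℝ := fun t => Real.sqrt ((α + Real.log (1 + t ^ 2)) ^ β / (α ^ β * (1 + t ^ 2)))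
    with hf
  have hfc : Continuous f := aux_cont α β hα hβ
  have haβ : (0:ℝ) < α ^ β := Real.rpow_pos_of_pos hα β
  -- constants
  set c₁ : ℝ := Real.sqrt ((α + Real.log 2) ^ β / α ^ β) with hc₁
  set c₂ : ℝ := Real.sqrt (2 / α ^ β) / (β + 2) with hc₂
  have hc₁0 : 0 < c₁ := by
    rw [hc₁]
    apply Real.sqrt_pos.2
    have h2 : (0:ℝ) < α + Real.log 2 := by
      have := Real.log_pos (by norm_num : (1:ℝ) < 2); linarith
    have := Real.rpow_pos_of_pos h2 β
    positivity
  have hc₂0 : 0 < c₂ := by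
    rw [hc₂]
    apply div_pos (Real.sqrt_pos.2 (by positivity)) (by linarith)
  set M : ℝ := c₁ / α ^ ((β + 2) / 2) + c₂ with hM
  have hpα : (0:ℝ) < α ^ ((β + 2) / 2) := Real.rpow_pos_of_pos hα _
  clear_value f c₁ c₂ M
  have hM0 : 0 < M := by rw [hM]; exact add_pos (div_pos hc₁0 hpα) hc₂0
  refine ⟨M, hM0, fun r hr => ?_⟩
  have hfpos : ∀ t : ℝ, 0 < f t := by
    intro t
    simp only [hf]
    apply Real.sqrt_pos.2
    have h1 : (0:ℝ) < 1 + t ^ 2 := by positivity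
    have h2 : (0:ℝ) < α + Real.log (1 + t ^ 2) := by
      have := Real.log_nonneg (by nlinarith : (1:ℝ) ≤ 1 + t ^ 2); linarith
    have := Real.rpow_pos_of_pos h2 β
    positivity
  have hint : ∀ a b : ℝ, IntervalIntegrable f MeasureTheory.volume a b :=
    fun a b => hfc.intervalIntegrable a b
  constructor
  · rw [rhoFJ, ← hf]
    exact intervalIntegral.intervalIntegral_pos_of_pos (hint 0 r)
      (fun t => hfpos t) (by linarith)
  -- upper bound
  have hy0 : ∀ t : ℝ, 0 < α + Real.log (1 + t ^ 2) := by
    intro t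
    have := Real.log_nonneg (by nlinarith : (1:ℝ) ≤ 1 + t ^ 2); linarith
  -- H and its derivative
  set H : ℝ → ℝ := fun t => c₂ * (α + Real.log (1 + t ^ 2)) ^ ((β + 2) / 2) with hH
  set H' : ℝ → ℝ := fun t =>
      c₂ * ((2 : ℕ) * t ^ 1 / (1 + t ^ 2) * ((β + 2) / 2) *
        (α + Real.log (1 + t ^ 2)) ^ ((β + 2) / 2 - 1)) with hH'
  clear_value H H'
  have hder : ∀ t : ℝ, HasDerivAt H (H' t) t := by
    intro t
    have h1 : HasDerivAt (fun t : ℝ => 1 + t ^ 2) ((2:ℕ) * t ^ 1) t :=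
      (hasDerivAt_pow 2 t).const_add 1
    have h2 : HasDerivAt (fun t : ℝ => α + Real.log (1 + t ^ 2))
        ((2:ℕ) * t ^ 1 / (1 + t ^ 2)) t :=
      (h1.log (by positivity)).const_add α
    have h3 := h2.rpow_const (p := (β + 2) / 2) (Or.inr (by linarith))
    rw [hH, hH']
    exact h3.const_mul c₂
  have hH'c : Continuous H' := by
    have h1 : ∀ t : ℝ, (1 : ℝ) + t ^ 2 ≠ 0 := fun t => by positivity
    have hcy : Continuous fun t : ℝ => (α + Real.log (1 + t ^ 2)) ^ ((β + 2) / 2 - 1) :=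
      Continuous.rpow_const
        (continuous_const.add ((continuous_const.add (continuous_pow 2)).log h1))
        (fun t => Or.inr (by linarith))
    have hA : Continuous fun t : ℝ => ((2:ℕ) : ℝ) * t ^ 1 / (1 + t ^ 2) :=
      Continuous.div (continuous_const.mul (continuous_pow 1))
        (continuous_const.add (continuous_pow 2)) h1
    rw [hH']
    exact continuous_const.mul (((hA.mul continuous_const)).mul hcy)
  -- split the integral
  have hsplit : rhoFJ α β r = (∫ t in (0:ℝ)..1, f t) + ∫ t in (1:ℝ)..r, f t := by
    rw [rhoFJ, ← hf]
    exact (intervalIntegral.integral_add_adjacent_intervals (hint 0 1) (hint 1 r)).symm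
  -- first piece
  have hpiece1 : (∫ t in (0:ℝ)..1, f t) ≤ c₁ := by
    have hb : ∀ t ∈ Set.Icc (0:ℝ) 1, f t ≤ c₁ := by
      intro t ht
      simp only [hf, hc₁]
      apply Real.sqrt_le_sqrt
      apply div_le_div₀ (by positivity)
      · apply Real.rpow_le_rpow (le_of_lt (hy0 t)) _ hβ
        have h2 : Real.log (1 + t ^ 2) ≤ Real.log 2 := by
          apply Real.log_le_log (by positivity)
          nlinarith [ht.1, ht.2]
        linarith
      · positivity
      · nlinarith [haβ, sq_nonneg t]
    calc (∫ t in (0:ℝ)..1, f t) ≤ ∫ t in (0:ℝ)..1, c₁ := by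
          apply intervalIntegral.integral_mono_on (by norm_num) (hint 0 1)
            (intervalIntegrable_const) hb
      _ = c₁ := by simp
  -- second piece
  have hpiece2 : (∫ t in (1:ℝ)..r, f t) ≤ H r - H 1 := by
    have heq : (∫ t in (1:ℝ)..r, H' t) = H r - H 1 :=
      intervalIntegral.integral_eq_sub_of_hasDerivAt
        (fun t _ => hder t) (hH'c.intervalIntegrable 1 r)
    rw [← heq]
    apply intervalIntegral.integral_mono_on hr (hint 1 r) (hH'c.intervalIntegrable 1 r)
    intro t ht
    have ht1 : (1:ℝ) ≤ t := ht.1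
    set y := α + Real.log (1 + t ^ 2) with hy
    clear_value y
    have hy0' : 0 < y := by rw [hy]; exact hy0 t
    have hu : (0:ℝ) < 1 + t ^ 2 := by positivity
    have hH'nn : 0 ≤ H' t := by
      simp only [hH', ← hy]
      have h0 : (0:ℝ) ≤ y ^ ((β + 2) / 2 - 1) := Real.rpow_nonneg hy0'.le _
      have h1t : (0:ℝ) ≤ t := by linarith
      positivity
    have e2 : (y ^ ((β + 2) / 2 - 1)) ^ 2 = y ^ β := by
      rw [sq, ← Real.rpow_add hy0']
      congr 1; ring
    have e3 : c₂ ^ 2 = 2 / α ^ β / (β + 2) ^ 2 := by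
      rw [hc₂, div_pow, Real.sq_sqrt (by positivity : (0:ℝ) ≤ 2 / α ^ β)]
    have hsq : (H' t) ^ 2 = 2 / α ^ β * y ^ β * (t ^ 2 / (1 + t ^ 2) ^ 2) := by
      have step : (H' t) ^ 2 = c₂ ^ 2 * ((β + 2) / 2) ^ 2 * (y ^ ((β + 2) / 2 - 1)) ^ 2 *
          (((2:ℕ) * t ^ 1) ^ 2 / (1 + t ^ 2) ^ 2) := by
        simp only [hH', ← hy]
        field_simp
      rw [step, e2, e3]
      have hb2 : (β + 2) ≠ 0 := by positivity
      field_simp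
      ring
    have hQle : y ^ β / (α ^ β * (1 + t ^ 2)) ≤ (H' t) ^ 2 := by
      rw [hsq]
      have hyb : (0:ℝ) ≤ y ^ β := Real.rpow_nonneg hy0'.le β
      have base : (1:ℝ) / (1 + t ^ 2) ≤ 2 * t ^ 2 / (1 + t ^ 2) ^ 2 := by
        rw [div_le_div_iff₀ hu (by positivity)]
        have ht2 : (1:ℝ) ≤ t ^ 2 := by
          have := mul_le_mul ht1 ht1 zero_le_one (le_trans zero_le_one ht1)
          nlinarith [this]
        have h : (1:ℝ) + t ^ 2 ≤ 2 * t ^ 2 := by linarith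
        calc 1 * (1 + t ^ 2) ^ 2 = (1 + t ^ 2) * (1 + t ^ 2) := by ring
          _ ≤ (2 * t ^ 2) * (1 + t ^ 2) := mul_le_mul_of_nonneg_right h hu.le
      calc y ^ β / (α ^ β * (1 + t ^ 2)) = y ^ β / α ^ β * (1 / (1 + t ^ 2)) := by
            rw [div_mul_eq_div_div]; ring
        _ ≤ y ^ β / α ^ β * (2 * t ^ 2 / (1 + t ^ 2) ^ 2) := by
            apply mul_le_mul_of_nonneg_left base (by positivity)
        _ = 2 / α ^ β * y ^ β * (t ^ 2 / (1 + t ^ 2) ^ 2) := by ring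
    calc f t = Real.sqrt (y ^ β / (α ^ β * (1 + t ^ 2))) := by simp only [hf, hy]
      _ ≤ Real.sqrt ((H' t) ^ 2) := Real.sqrt_le_sqrt hQle
      _ = H' t := Real.sqrt_sq hH'nn
  -- conclude
  have hyr : α ≤ α + Real.log (1 + r ^ 2) := by
    have := Real.log_nonneg (by nlinarith [sq_nonneg r] : (1:ℝ) ≤ 1 + r ^ 2); linarith
  have hpow : α ^ ((β + 2) / 2) ≤ (α + Real.log (1 + r ^ 2)) ^ ((β + 2) / 2) :=
    Real.rpow_le_rpow hα.le hyr (by linarith)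
  have hH1 : 0 ≤ H 1 := by
    simp only [hH]
    have := Real.rpow_nonneg (hy0 1).le ((β + 2) / 2)
    positivity
  have : rhoFJ α β r ≤ c₁ + c₂ * (α + Real.log (1 + r ^ 2)) ^ ((β + 2) / 2) := by
    rw [hsplit]
    have : H r - H 1 ≤ c₂ * (α + Real.log (1 + r ^ 2)) ^ ((β + 2) / 2) := by
      simp only [hH] at hH1 ⊢; linarith
    linarith
  have hc1le : c₁ ≤ c₁ / α ^ ((β + 2) / 2) * (α + Real.log (1 + r ^ 2)) ^ ((β + 2) / 2) := by
    rw [div_mul_eq_mul_div, le_div_iff₀ hpα]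
    exact mul_le_mul_of_nonneg_left hpow hc₁0.le
  rw [hM]
  calc rhoFJ α β r ≤ c₁ + c₂ * (α + Real.log (1 + r ^ 2)) ^ ((β + 2) / 2) := this
    _ ≤ (c₁ / α ^ ((β + 2) / 2) + c₂) * (α + Real.log (1 + r ^ 2)) ^ ((β + 2) / 2) := by
        rw [add_mul]; linarith

lemma aux_R (n : ℕ) (hn : 2 ≤ n) (α β : ℝ) (hβ : 0 ≤ β) (hαβ : β < α) :
    ∃ C : ℝ, 0 < C ∧ ∀ r : ℝ, 2 + Real.exp α ≤ r →
      |RscalFJ n α β r| ≤ C * (α + Real.log (1 + r ^ 2)) ^ (-(β + 1)) := by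
  have hα : 0 < α := lt_of_le_of_lt hβ hαβ
  set k : ℝ := (n : ℝ) - 1 with hk
  have hk1 : (1:ℝ) ≤ k := by
    rw [hk]
    have : (2:ℝ) ≤ (n:ℝ) := by exact_mod_cast hn
    linarith
  have hk0 : (0:ℝ) < k := by linarith
  set b : ℝ := β + 1 with hb
  have hb1 : (1:ℝ) ≤ b := by rw [hb]; linarith
  have hb0 : (0:ℝ) < b := by linarith
  set a : ℝ := α ^ β with ha
  have ha0 : (0:ℝ) < a := by rw [ha]; exact Real.rpow_pos_of_pos hα β
  clear_value k b a
  set K1 : ℝ := (α + 1) + 2 * k * b + β / (2 * α) + 2 * k * b + 2 * k * b ^ 2 / α with hK1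
  set K2 : ℝ := 1 + 2 * k + k * b / α with hK2
  clear_value K1 K2
  have hK10 : 0 < K1 := by
    have h1 : 0 < 2 * k * b := mul_pos (mul_pos two_pos hk0) hb0
    have h2 : 0 ≤ β / (2 * α) := div_nonneg hβ (by linarith)
    have h3 : 0 < 2 * k * b ^ 2 / α := div_pos (mul_pos (mul_pos two_pos hk0) (pow_pos hb0 2)) hα
    rw [hK1]; linarith
  have hK20 : 0 < K2 := by
    have h1 : 0 < 2 * k := mul_pos two_pos hk0
    have h2 : 0 < k * b / α := div_pos (mul_pos hk0 hb0) hα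
    rw [hK2]; linarith
  refine ⟨a * K1 + 2 * a * b * k * K2,
    add_pos (mul_pos ha0 hK10)
      (mul_pos (mul_pos (mul_pos (mul_pos two_pos ha0) hb0) hk0) hK20),
    fun r hr => ?_⟩
  have hexp : 0 < Real.exp α := Real.exp_pos α
  have hr2 : 2 ≤ r := by linarith
  have hr0 : 0 < r := by linarith
  have hrsq : 4 ≤ r ^ 2 := by nlinarith
  -- unfold
  rw [RscalFJ]
  rw [← hk, ← hb, ← ha]
  set u : ℝ := 1 + r ^ 2 with hu
  have hu0 : (0:ℝ) < u := by rw [hu]; positivity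
  have hu5 : (5:ℝ) ≤ u := by rw [hu]; linarith
  have hru : r ^ 2 ≤ u := by rw [hu]; linarith
  have hur : u ≤ 2 * r ^ 2 := by rw [hu]; linarith
  set y : ℝ := α + Real.log u with hy
  have hlogr : α ≤ Real.log r := by
    have h1 : Real.exp α ≤ r := by linarith
    have := Real.log_le_log hexp h1
    rwa [Real.log_exp] at this
  have hy2 : 2 * α ≤ y := by
    rw [hy]
    have h1 : Real.log (r ^ 2) ≤ Real.log u := by
      apply Real.log_le_log (pow_pos hr0 2)
      rw [hu]; linarith
    rw [Real.log_pow] at h1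
    push_cast at h1
    linarith
  have hy0 : (0:ℝ) < y := by linarith
  have hyu : y ≤ (α + 1) * u := by
    have h1 : Real.log u ≤ u - 1 := Real.log_le_sub_one_of_pos hu0
    have h2 : α * 1 ≤ α * u := mul_le_mul_of_nonneg_left (by linarith) hα.le
    rw [hy]
    nlinarith
  set D : ℝ := y ^ b - α ^ b with hD
  have hyb : (0:ℝ) < y ^ β := Real.rpow_pos_of_pos hy0 β
  have hyb1 : (0:ℝ) < y ^ b := Real.rpow_pos_of_pos hy0 b
  have hDlb : y ^ b / 2 ≤ D := by
    have h1 : (2 * α) ^ b ≤ y ^ b := Real.rpow_le_rpow (by linarith) hy2 hb0.le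
    have h2 : (2 * α) ^ b = 2 ^ b * α ^ b := Real.mul_rpow (by norm_num) hα.le
    have h3 : (2:ℝ) ≤ 2 ^ b := by
      calc (2:ℝ) = 2 ^ (1:ℝ) := (Real.rpow_one 2).symm
        _ ≤ 2 ^ b := Real.rpow_le_rpow_of_exponent_le one_le_two hb1
    have h4 : (0:ℝ) < α ^ b := Real.rpow_pos_of_pos hα b
    have h5 : 2 * α ^ b ≤ y ^ b := by
      have h6 : 2 * α ^ b ≤ 2 ^ b * α ^ b := mul_le_mul_of_nonneg_right h3 h4.le
      rw [← h2] at h6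
      linarith
    rw [hD]; linarith
  have hD0 : (0:ℝ) < D := lt_of_lt_of_le (by linarith) hDlb
  -- rpow identities
  have hybmul : y ^ β * y = y ^ b := by
    rw [hb, ← Real.rpow_add_one hy0.ne' β]
  have hybm1 : y ^ (β - 1) * y = y ^ β := by
    rw [← Real.rpow_add_one hy0.ne' (β - 1)]
    norm_num
  have hy2pow : y ^ (2:ℝ) = y ^ 2 := Real.rpow_two y
  have hsqD : y ^ b * y ^ b = y ^ (2 * β) * y ^ 2 := by
    rw [← hy2pow, ← Real.rpow_add hy0, ← Real.rpow_add hy0, hb]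
    congr 1; ring
  have hy2b : (0:ℝ) < y ^ (2 * β) := Real.rpow_pos_of_pos hy0 _
  have hybm1pos : (0:ℝ) < y ^ (β - 1) := Real.rpow_pos_of_pos hy0 _
  clear_value u y D
  -- basic positivity
  have hyu0 : (0:ℝ) < y * u := mul_pos hy0 hu0
  have hDu0 : (0:ℝ) < D * u := mul_pos hD0 hu0
  have hu2 : (0:ℝ) < u ^ 2 := pow_pos hu0 2
  have hy2p : (0:ℝ) < y ^ 2 := pow_pos hy0 2
  have hD2 : (0:ℝ) < D ^ 2 := pow_pos hD0 2
  have hrp : (0:ℝ) < r ^ 2 := pow_pos hr0 2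
  have tri : ∀ x z : ℝ, |x - z| ≤ |x| + |z| := fun x z => by
    simpa [sub_eq_add_neg] using abs_add_le x (-z)
  -- core estimate
  have hcore : y ^ β / (D * u) ≤ 2 / (y * u) := by
    rw [div_le_div_iff₀ hDu0 hyu0]
    have h1 : y ^ β * y ≤ 2 * D := by rw [hybmul]; linarith
    calc y ^ β * (y * u) = (y ^ β * y) * u := by ring
      _ ≤ (2 * D) * u := mul_le_mul_of_nonneg_right h1 hu0.le
      _ = 2 * (D * u) := by ring
  have habs1 : |β / y - 1| ≤ 1 := by
    rw [abs_le]
    constructor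
    · have : 0 ≤ β / y := div_nonneg hβ hy0.le
      linarith
    · have : β / y ≤ 1 := by
        rw [div_le_one hy0]; linarith
      linarith
  -- term 1
  have hT1 : |(β / y - 1) / u ^ 2| ≤ (α + 1) / (y * u) := by
    calc |(β / y - 1) / u ^ 2| = |β / y - 1| / u ^ 2 := by
          rw [abs_div, abs_of_nonneg hu2.le]
      _ ≤ 1 / u ^ 2 := (div_le_div_iff_of_pos_right hu2).2 habs1
      _ ≤ (α + 1) / (y * u) := by
          rw [div_le_div_iff₀ hu2 hyu0]
          linarith [mul_le_mul_of_nonneg_right hyu hu0.le]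
  -- term 2
  have hkb0 : (0:ℝ) < k * b := mul_pos hk0 hb0
  have hT2 : k * b * y ^ β / (D * u) ≤ 2 * k * b / (y * u) := by
    calc k * b * y ^ β / (D * u) = (k * b) * (y ^ β / (D * u)) := by ring
      _ ≤ (k * b) * (2 / (y * u)) := mul_le_mul_of_nonneg_left hcore hkb0.le
      _ = 2 * k * b / (y * u) := by ring
  -- term 3
  have hT3 : β * r ^ 2 / (y ^ 2 * u ^ 2) ≤ β / (2 * α) / (y * u) := by
    rw [div_div, div_le_div_iff₀ (mul_pos hy2p hu2) (mul_pos (by linarith : (0:ℝ) < 2 * α) hyu0)]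
    have m1 : r ^ 2 * (2 * α) ≤ u * y := mul_le_mul hru hy2 (by linarith) hu0.le
    have m2 := mul_le_mul_of_nonneg_left m1 (mul_nonneg hβ hyu0.le)
    linarith [m2]
  -- term 4
  have hT4 : |k * b * y ^ (β - 1) * (β - y) * r ^ 2 / (D * u ^ 2)| ≤ 2 * k * b / (y * u) := by
    have habs4 : |β - y| ≤ y := by
      rw [abs_le]; constructor <;> linarith
    have hA0 : (0:ℝ) ≤ k * b * y ^ (β - 1) := (mul_pos hkb0 hybm1pos).le
    have e : |k * b * y ^ (β - 1) * (β - y) * r ^ 2| = k * b * y ^ (β - 1) * |β - y| * r ^ 2 := by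
      rw [abs_mul, abs_mul, abs_of_nonneg hA0, abs_of_nonneg hrp.le]
    have hkbyb : (0:ℝ) ≤ k * b * y ^ β := (mul_pos hkb0 hyb).le
    calc |k * b * y ^ (β - 1) * (β - y) * r ^ 2 / (D * u ^ 2)|
        = |k * b * y ^ (β - 1) * (β - y) * r ^ 2| / (D * u ^ 2) := by
          rw [abs_div, abs_of_nonneg (mul_pos hD0 hu2).le]
      _ = k * b * y ^ (β - 1) * |β - y| * r ^ 2 / (D * u ^ 2) := by rw [e]
      _ ≤ k * b * y ^ (β - 1) * y * r ^ 2 / (D * u ^ 2) := by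
          apply div_le_div₀ (mul_nonneg (mul_nonneg hA0 hy0.le) hrp.le)
            (mul_le_mul_of_nonneg_right (mul_le_mul_of_nonneg_left habs4 hA0) hrp.le)
            (mul_pos hD0 hu2) le_rfl
      _ = k * b * (y ^ (β - 1) * y) * r ^ 2 / (D * u ^ 2) := by ring
      _ = k * b * y ^ β * r ^ 2 / (D * u ^ 2) := by rw [hybm1]
      _ ≤ k * b * y ^ β * u / (D * u ^ 2) := by
          apply div_le_div₀ (mul_nonneg hkbyb hu0.le)
            (mul_le_mul_of_nonneg_left hru hkbyb) (mul_pos hD0 hu2) le_rfl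
      _ = (k * b) * (y ^ β / (D * u)) := by
          field_simp [hD0.ne', hu0.ne']
      _ ≤ (k * b) * (2 / (y * u)) := mul_le_mul_of_nonneg_left hcore hkb0.le
      _ = 2 * k * b / (y * u) := by ring
  -- term 5
  have hkb2 : (0:ℝ) ≤ k * b ^ 2 := (mul_pos hk0 (pow_pos hb0 2)).le
  have hT5 : k * b ^ 2 * y ^ (2 * β) * r ^ 2 / (D ^ 2 * u ^ 2) ≤ 2 * k * b ^ 2 / α / (y * u) := by
    have s3 : y ^ (2 * β) * y ^ 2 ≤ 4 * D ^ 2 := by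
      have h1 : y ^ b ≤ 2 * D := by linarith
      have h2 := mul_le_mul h1 h1 hyb1.le (by linarith : (0:ℝ) ≤ 2 * D)
      rw [hsqD] at h2
      linarith [h2]
    have key : y ^ (2 * β) * r ^ 2 * (α * (y * u)) ≤ 2 * (D ^ 2 * u ^ 2) := by
      have s2 : α * y ≤ y * y / 2 := by
        have := mul_le_mul_of_nonneg_right hy2 hy0.le
        linarith
      have q1 : y ^ (2 * β) * (r ^ 2 * u) ≤ y ^ (2 * β) * (u * u) :=
        mul_le_mul_of_nonneg_left (mul_le_mul_of_nonneg_right hru hu0.le) hy2b.le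
      have q2 : (α * y) * (y ^ (2 * β) * (r ^ 2 * u)) ≤ (y * y / 2) * (y ^ (2 * β) * (u * u)) :=
        mul_le_mul s2 q1 (mul_nonneg hy2b.le (mul_nonneg hrp.le hu0.le))
          (by linarith [mul_self_nonneg y])
      have q5 := mul_le_mul_of_nonneg_right s3 (mul_nonneg hu0.le hu0.le)
      linarith [q2, q5]
    rw [div_div, div_le_div_iff₀ (mul_pos hD2 hu2) (mul_pos hα hyu0)]
    linarith [mul_le_mul_of_nonneg_left key hkb2]
  -- R11 bound
  have h2' : |k * b * y ^ β / (D * u)| = k * b * y ^ β / (D * u) :=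
    abs_of_nonneg (div_nonneg (mul_nonneg hkb0.le hyb.le) hDu0.le)
  have h3' : |β * r ^ 2 / (y ^ 2 * u ^ 2)| = β * r ^ 2 / (y ^ 2 * u ^ 2) :=
    abs_of_nonneg (div_nonneg (mul_nonneg hβ hrp.le) (mul_pos hy2p hu2).le)
  have h5' : |k * b ^ 2 * y ^ (2 * β) * r ^ 2 / (D ^ 2 * u ^ 2)|
      = k * b ^ 2 * y ^ (2 * β) * r ^ 2 / (D ^ 2 * u ^ 2) :=
    abs_of_nonneg (div_nonneg (mul_nonneg (mul_nonneg hkb2 hy2b.le) hrp.le)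
      (mul_pos hD2 hu2).le)
  have hR11 : |(β / y - 1) / u ^ 2 + k * b * y ^ β / (D * u) - β * r ^ 2 / (y ^ 2 * u ^ 2)
      + k * b * y ^ (β - 1) * (β - y) * r ^ 2 / (D * u ^ 2)
      - k * b ^ 2 * y ^ (2 * β) * r ^ 2 / (D ^ 2 * u ^ 2)| ≤ K1 / (y * u) := by
    have step : |(β / y - 1) / u ^ 2 + k * b * y ^ β / (D * u) - β * r ^ 2 / (y ^ 2 * u ^ 2)
        + k * b * y ^ (β - 1) * (β - y) * r ^ 2 / (D * u ^ 2)
        - k * b ^ 2 * y ^ (2 * β) * r ^ 2 / (D ^ 2 * u ^ 2)|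
        ≤ |(β / y - 1) / u ^ 2| + |k * b * y ^ β / (D * u)| + |β * r ^ 2 / (y ^ 2 * u ^ 2)|
          + |k * b * y ^ (β - 1) * (β - y) * r ^ 2 / (D * u ^ 2)|
          + |k * b ^ 2 * y ^ (2 * β) * r ^ 2 / (D ^ 2 * u ^ 2)| := by
      calc |(β / y - 1) / u ^ 2 + k * b * y ^ β / (D * u) - β * r ^ 2 / (y ^ 2 * u ^ 2)
          + k * b * y ^ (β - 1) * (β - y) * r ^ 2 / (D * u ^ 2)
          - k * b ^ 2 * y ^ (2 * β) * r ^ 2 / (D ^ 2 * u ^ 2)|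
          ≤ |(β / y - 1) / u ^ 2 + k * b * y ^ β / (D * u) - β * r ^ 2 / (y ^ 2 * u ^ 2)
            + k * b * y ^ (β - 1) * (β - y) * r ^ 2 / (D * u ^ 2)|
            + |k * b ^ 2 * y ^ (2 * β) * r ^ 2 / (D ^ 2 * u ^ 2)| := tri _ _
        _ ≤ (|(β / y - 1) / u ^ 2 + k * b * y ^ β / (D * u) - β * r ^ 2 / (y ^ 2 * u ^ 2)|
            + |k * b * y ^ (β - 1) * (β - y) * r ^ 2 / (D * u ^ 2)|)
            + |k * b ^ 2 * y ^ (2 * β) * r ^ 2 / (D ^ 2 * u ^ 2)| :=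
            add_le_add_left (abs_add_le _ _) _
        _ ≤ ((|(β / y - 1) / u ^ 2 + k * b * y ^ β / (D * u)| + |β * r ^ 2 / (y ^ 2 * u ^ 2)|)
            + |k * b * y ^ (β - 1) * (β - y) * r ^ 2 / (D * u ^ 2)|)
            + |k * b ^ 2 * y ^ (2 * β) * r ^ 2 / (D ^ 2 * u ^ 2)| :=
            add_le_add_left (add_le_add_left (tri _ _) _) _
        _ ≤ (((|(β / y - 1) / u ^ 2| + |k * b * y ^ β / (D * u)|) + |β * r ^ 2 / (y ^ 2 * u ^ 2)|)
            + |k * b * y ^ (β - 1) * (β - y) * r ^ 2 / (D * u ^ 2)|)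
            + |k * b ^ 2 * y ^ (2 * β) * r ^ 2 / (D ^ 2 * u ^ 2)| :=
            add_le_add_left (add_le_add_left (add_le_add_left (abs_add_le _ _) _) _) _
        _ = _ := by ring
    rw [h2', h3', h5'] at step
    calc |(β / y - 1) / u ^ 2 + k * b * y ^ β / (D * u) - β * r ^ 2 / (y ^ 2 * u ^ 2)
        + k * b * y ^ (β - 1) * (β - y) * r ^ 2 / (D * u ^ 2)
        - k * b ^ 2 * y ^ (2 * β) * r ^ 2 / (D ^ 2 * u ^ 2)| ≤ _ := step
      _ ≤ (α + 1) / (y * u) + 2 * k * b / (y * u) + β / (2 * α) / (y * u)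
          + 2 * k * b / (y * u) + 2 * k * b ^ 2 / α / (y * u) :=
          add_le_add (add_le_add (add_le_add (add_le_add hT1 hT2) hT3) hT4) hT5
      _ = K1 / (y * u) := by rw [hK1]; ring
  -- Rv bound
  have hRv : |(β / y - 1) / u - k / r ^ 2 + k * b * y ^ β / (D * u)| ≤ K2 / u := by
    have s1 : |(β / y - 1) / u| ≤ 1 / u := by
      rw [abs_div, abs_of_nonneg hu0.le]
      exact (div_le_div_iff_of_pos_right hu0).2 habs1
    have s2 : |k / r ^ 2| ≤ 2 * k / u := by
      rw [abs_of_nonneg (div_nonneg hk0.le hrp.le), div_le_div_iff₀ hrp hu0]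
      linarith [mul_le_mul_of_nonneg_left hur hk0.le]
    have s3 : |k * b * y ^ β / (D * u)| ≤ k * b / α / u := by
      rw [h2']
      calc k * b * y ^ β / (D * u) ≤ 2 * k * b / (y * u) := hT2
        _ ≤ k * b / α / u := by
            rw [div_div, div_le_div_iff₀ hyu0 (mul_pos hα hu0)]
            linarith [mul_le_mul_of_nonneg_left hy2 (mul_nonneg hkb0.le hu0.le)]
    calc |(β / y - 1) / u - k / r ^ 2 + k * b * y ^ β / (D * u)|
        ≤ |(β / y - 1) / u - k / r ^ 2| + |k * b * y ^ β / (D * u)| := abs_add_le _ _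
      _ ≤ (|(β / y - 1) / u| + |k / r ^ 2|) + |k * b * y ^ β / (D * u)| :=
          add_le_add_left (tri _ _) _
      _ ≤ (1 / u + 2 * k / u) + k * b / α / u := add_le_add (add_le_add s1 s2) s3
      _ = K2 / u := by rw [hK2]; ring
  -- assemble
  rw [Real.rpow_neg hy0.le, ← div_eq_mul_inv, le_div_iff₀ hyb1]
  have hg11nn : (0:ℝ) ≤ a * u / y ^ β := div_nonneg (mul_nonneg ha0.le hu0.le) hyb.le
  have h1 : |a * u / y ^ β *
      ((β / y - 1) / u ^ 2 + k * b * y ^ β / (D * u) - β * r ^ 2 / (y ^ 2 * u ^ 2)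
        + k * b * y ^ (β - 1) * (β - y) * r ^ 2 / (D * u ^ 2)
        - k * b ^ 2 * y ^ (2 * β) * r ^ 2 / (D ^ 2 * u ^ 2))| * y ^ b ≤ a * K1 := by
    rw [abs_mul, abs_of_nonneg hg11nn]
    calc a * u / y ^ β * |(β / y - 1) / u ^ 2 + k * b * y ^ β / (D * u)
          - β * r ^ 2 / (y ^ 2 * u ^ 2)
          + k * b * y ^ (β - 1) * (β - y) * r ^ 2 / (D * u ^ 2)
          - k * b ^ 2 * y ^ (2 * β) * r ^ 2 / (D ^ 2 * u ^ 2)| * y ^ b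
        ≤ a * u / y ^ β * (K1 / (y * u)) * y ^ b :=
          mul_le_mul_of_nonneg_right (mul_le_mul_of_nonneg_left hR11 hg11nn)
            (Real.rpow_nonneg hy0.le b)
      _ = a * u / y ^ β * (K1 / (y * u)) * (y ^ β * y) := by rw [hybmul]
      _ = a * K1 := by
          field_simp [hy0.ne', hu0.ne', hyb.ne']
  have hgv0 : (0:ℝ) ≤ k * (b * a * r ^ 2 / D) :=
    mul_nonneg hk0.le (div_nonneg (mul_nonneg (mul_nonneg hb0.le ha0.le) hrp.le) hD0.le)
  have h2 : |k * (b * a * r ^ 2 / D) *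
      ((β / y - 1) / u - k / r ^ 2 + k * b * y ^ β / (D * u))| * y ^ b
      ≤ 2 * a * b * k * K2 := by
    rw [abs_mul, abs_of_nonneg hgv0]
    have hr2u : r ^ 2 / u ≤ 1 := by rw [div_le_one hu0]; exact hru
    have hyD2 : y ^ b / D ≤ 2 := by rw [div_le_iff₀ hD0]; linarith
    calc k * (b * a * r ^ 2 / D) * |(β / y - 1) / u - k / r ^ 2
          + k * b * y ^ β / (D * u)| * y ^ b
        ≤ k * (b * a * r ^ 2 / D) * (K2 / u) * y ^ b :=
          mul_le_mul_of_nonneg_right (mul_le_mul_of_nonneg_left hRv hgv0)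
            (Real.rpow_nonneg hy0.le b)
      _ = (a * b * k * K2) * ((r ^ 2 / u) * (y ^ b / D)) := by ring
      _ ≤ (a * b * k * K2) * (1 * 2) :=
          mul_le_mul_of_nonneg_left
            (mul_le_mul hr2u hyD2 (div_nonneg hyb1.le hD0.le) (by norm_num))
            (mul_nonneg (mul_nonneg (mul_nonneg ha0.le hb0.le) hk0.le) hK20.le)
      _ = 2 * a * b * k * K2 := by ring
  calc |a * u / y ^ β *
        ((β / y - 1) / u ^ 2 + k * b * y ^ β / (D * u) - β * r ^ 2 / (y ^ 2 * u ^ 2)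
          + k * b * y ^ (β - 1) * (β - y) * r ^ 2 / (D * u ^ 2)
          - k * b ^ 2 * y ^ (2 * β) * r ^ 2 / (D ^ 2 * u ^ 2))
      + k * (b * a * r ^ 2 / D) *
        ((β / y - 1) / u - k / r ^ 2 + k * b * y ^ β / (D * u))| * y ^ b
      ≤ (|a * u / y ^ β *
        ((β / y - 1) / u ^ 2 + k * b * y ^ β / (D * u) - β * r ^ 2 / (y ^ 2 * u ^ 2)
          + k * b * y ^ (β - 1) * (β - y) * r ^ 2 / (D * u ^ 2)
          - k * b ^ 2 * y ^ (2 * β) * r ^ 2 / (D ^ 2 * u ^ 2))|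
      + |k * (b * a * r ^ 2 / D) *
        ((β / y - 1) / u - k / r ^ 2 + k * b * y ^ β / (D * u))|) * y ^ b :=
        mul_le_mul_of_nonneg_right (abs_add_le _ _) (Real.rpow_nonneg hy0.le b)
    _ = |a * u / y ^ β *
        ((β / y - 1) / u ^ 2 + k * b * y ^ β / (D * u) - β * r ^ 2 / (y ^ 2 * u ^ 2)
          + k * b * y ^ (β - 1) * (β - y) * r ^ 2 / (D * u ^ 2)
          - k * b ^ 2 * y ^ (2 * β) * r ^ 2 / (D ^ 2 * u ^ 2))| * y ^ b
      + |k * (b * a * r ^ 2 / D) *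
        ((β / y - 1) / u - k / r ^ 2 + k * b * y ^ β / (D * u))| * y ^ b := by ring
    _ ≤ a * K1 + 2 * a * b * k * K2 := add_le_add h1 h2


theorem stmt_18 (n : ℕ) (hn : 2 ≤ n) (α β : ℝ) (hβ : 0 ≤ β) (hαβ : β < α) :
    ∃ C r₀ : ℝ, 0 < C ∧ 1 < r₀ ∧
      ∀ r : ℝ, r₀ ≤ r →
        |RscalFJ n α β r| ≤ C * rhoFJ α β r ^ (-(2 * (β + 1)) / (β + 2)) := by
  have hα : 0 < α := lt_of_le_of_lt hβ hαβ
  obtain ⟨C₃, hC₃, hR⟩ := aux_R n hn α β hβ hαβ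
  obtain ⟨M, hM0, hρ⟩ := aux_rho α β hβ hα
  have hMe : 0 < M ^ (-(2 * (β + 1)) / (β + 2)) := Real.rpow_pos_of_pos hM0 _
  refine ⟨C₃ * (M ^ (-(2 * (β + 1)) / (β + 2)))⁻¹, 2 + Real.exp α,
    mul_pos hC₃ (inv_pos.2 hMe), by linarith [Real.exp_pos α], fun r hrr => ?_⟩
  have hr1 : 1 ≤ r := by linarith [Real.exp_pos α]
  obtain ⟨hρpos, hρle⟩ := hρ r hr1
  have hy0 : 0 < α + Real.log (1 + r ^ 2) := by
    have := Real.log_nonneg (by nlinarith [sq_nonneg r] : (1:ℝ) ≤ 1 + r ^ 2)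
    linarith
  have he0 : -(2 * (β + 1)) / (β + 2) ≤ 0 := by
    have h1 : 0 ≤ 2 * (β + 1) / (β + 2) := by positivity
    rw [neg_div]
    linarith
  have hstep1 : (M * (α + Real.log (1 + r ^ 2)) ^ ((β + 2) / 2)) ^ (-(2 * (β + 1)) / (β + 2))
      ≤ rhoFJ α β r ^ (-(2 * (β + 1)) / (β + 2)) :=
    Real.rpow_le_rpow_of_nonpos hρpos hρle he0
  have hstep2 : (M * (α + Real.log (1 + r ^ 2)) ^ ((β + 2) / 2)) ^ (-(2 * (β + 1)) / (β + 2))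
      = M ^ (-(2 * (β + 1)) / (β + 2))
        * ((α + Real.log (1 + r ^ 2)) ^ ((β + 2) / 2)) ^ (-(2 * (β + 1)) / (β + 2)) :=
    Real.mul_rpow hM0.le (Real.rpow_nonneg hy0.le _)
  have hstep3 : ((α + Real.log (1 + r ^ 2)) ^ ((β + 2) / 2)) ^ (-(2 * (β + 1)) / (β + 2))
      = (α + Real.log (1 + r ^ 2)) ^ (-(β + 1)) := by
    rw [← Real.rpow_mul hy0.le]
    congr 1
    have hb2 : β + 2 ≠ 0 := by positivity
    field_simp
  calc |RscalFJ n α β r| ≤ C₃ * (α + Real.log (1 + r ^ 2)) ^ (-(β + 1)) := hR r hrr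
    _ = (C₃ * (M ^ (-(2 * (β + 1)) / (β + 2)))⁻¹)
        * (M ^ (-(2 * (β + 1)) / (β + 2)) * (α + Real.log (1 + r ^ 2)) ^ (-(β + 1))) := by
        field_simp
    _ = (C₃ * (M ^ (-(2 * (β + 1)) / (β + 2)))⁻¹)
        * ((M * (α + Real.log (1 + r ^ 2)) ^ ((β + 2) / 2)) ^ (-(2 * (β + 1)) / (β + 2))) := by
        rw [hstep2, hstep3]
    _ ≤ (C₃ * (M ^ (-(2 * (β + 1)) / (β + 2)))⁻¹) * rhoFJ α β r ^ (-(2 * (β + 1)) / (β + 2)) :=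
        mul_le_mul_of_nonneg_left hstep1 (mul_pos hC₃ (inv_pos.2 hMe)).le
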